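/- Let F, G : J → ℝ be differentiable with derivatives f, g, and let I ⊆ J be an interval on which g never vanishes, such that [F(b)−F(a)]g((a+b)/2) = [G(b)−G(a)]f((a+b)/2) holds for all a, b ∈ I. Then there exist constants A, K ∈ ℝ and x₀ ∈ I such that f(x) = (A + K·∫_{x₀}^{x} dt/g(t)²)·g(x) for all x ∈ I. -/

import Mathlib

open Set Filter MeasureTheory intervalIntegral Topology

lemma div_slope_eq (A B c d : ℝ) : (A - B) / (c - d) = (B - A) / (d - c) := by
  rw [show A - B = -(B - A) by ring, show c - d = -(d - c) by ring, neg_div_neg_eq]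

lemma aux_nz (S : Set ℝ) (hSc : S.OrdConnected)
    (G g D : ℝ → ℝ)
    (hG : ∀ x ∈ S, HasDerivAt G (g x) x)
    (hDc : ∀ x ∈ S, ContinuousAt D x)
    (hC : ∀ m ∈ S, D m ≠ 0 → HasDerivAt (fun t => D t * g t ^ 2) 0 m)
    (hgne : ∀ x ∈ S, g x ≠ 0)
    (m₀ z : ℝ) (hm₀ : m₀ ∈ S) (hz : z ∈ S) (hlt : m₀ < z) (hD0 : D m₀ ≠ 0) : D z ≠ 0 := by
  intro hDz
  have hIccS : Icc m₀ z ⊆ S := hSc.out hm₀ hz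
  set T : Set ℝ := Icc m₀ z ∩ D ⁻¹' {0} with hTdef
  have hTclosed : IsClosed T :=
    ContinuousOn.preimage_isClosed_of_isClosed
      (fun x hx => (hDc x (hIccS hx)).continuousWithinAt) isClosed_Icc isClosed_singleton
  have hTne : T.Nonempty := ⟨z, ⟨hlt.le, le_refl z⟩, hDz⟩
  have hTbdd : BddBelow T := (bddBelow_Icc : BddBelow (Icc m₀ z)).mono inter_subset_left
  set d := sInf T with hddef
  have hdT : d ∈ T := hTclosed.csInf_mem hTne hTbdd
  have hdIcc : d ∈ Icc m₀ z := hdT.1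
  have hDd : D d = 0 := hdT.2
  have hdS : d ∈ S := hIccS hdIcc
  have hm₀d : m₀ < d := lt_of_le_of_ne hdIcc.1 (fun h => hD0 (h ▸ hDd))
  have hIco : ∀ t ∈ Ico m₀ d, D t ≠ 0 := by
    intro t ht h0
    have : t ∈ T := ⟨⟨ht.1, ht.2.le.trans hdIcc.2⟩, h0⟩
    exact absurd (csInf_le hTbdd this) (not_le.2 ht.2)
  have hIcoS : Ico m₀ d ⊆ S := fun t ht => hIccS ⟨ht.1, ht.2.le.trans hdIcc.2⟩
  set K := D m₀ * g m₀ ^ 2 with hKdef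
  have hK0 : K ≠ 0 := mul_ne_zero hD0 (pow_ne_zero 2 (hgne m₀ hm₀))
  have hCc : ∀ t ∈ Ico m₀ d, D t * g t ^ 2 = K := by
    intro t ht
    rcases eq_or_lt_of_le ht.1 with h | h
    · rw [← h]
    · have hsub : Icc m₀ t ⊆ Ico m₀ d := fun s hs => ⟨hs.1, lt_of_le_of_lt hs.2 ht.2⟩
      obtain ⟨c, hc, hc2⟩ := exists_hasDerivAt_eq_slope (fun t => D t * g t ^ 2) (fun _ => 0) h
        (fun s hs => (hC s (hIcoS (hsub hs)) (hIco s (hsub hs))).continuousAt.continuousWithinAt)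
        (fun s hs => hC s (hIcoS (hsub (Ioo_subset_Icc_self hs))) (hIco s (hsub (Ioo_subset_Icc_self hs))))
      rcases div_eq_zero_iff.1 hc2.symm with h3 | h3
      · linarith [h3]
      · exact absurd (by linarith : t = m₀) (ne_of_gt h)
  -- slope of G at d from the left
  have hslopeG : Tendsto (fun t => (G d - G t) / (d - t)) (𝓝[<] d) (𝓝 (g d)) := by
    have h1 := hasDerivAt_iff_tendsto_slope.1 (hG d hdS)
    have h2 : Tendsto (slope G d) (𝓝[<] d) (𝓝 (g d)) :=
      h1.mono_left (nhdsWithin_mono d (fun t ht => ne_of_lt ht))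
    refine h2.congr (fun t => ?_)
    rw [slope_def_field, div_slope_eq (G t) (G d) t d]
  set B := |g d| + 1 with hBdef
  have hB0 : 0 < B := by positivity
  have hev1 : ∀ᶠ t in 𝓝[<] d, |(G d - G t) / (d - t)| < B :=
    (hslopeG.abs).eventually_lt_const (by simp [hBdef])
  have hDto0 : Tendsto D (𝓝[<] d) (𝓝 0) := by
    have := (hDc d hdS).tendsto
    rw [hDd] at this
    exact this.mono_left nhdsWithin_le_nhds
  have hev2 : ∀ᶠ t in 𝓝[<] d, |D t| < |K| / B ^ 2 :=
    (hDto0.abs).eventually_lt_const (by simpa using div_pos (abs_pos.2 hK0) (by positivity : (0:ℝ) < B ^ 2))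
  have hevIoo : ∀ᶠ t in 𝓝[<] d, t ∈ Ioo m₀ d :=
    eventually_of_mem (Ioo_mem_nhdsLT_of_mem ⟨hm₀d, le_refl d⟩) (fun t ht => ht)
  obtain ⟨l, hl, hIooE⟩ := mem_nhdsLT_iff_exists_Ioo_subset.1 (hev2.and hevIoo)
  set l' := max l m₀ with hl'def
  have hl'd : l' < d := max_lt hl hm₀d
  have hgbig : ∀ s ∈ Ioo l' d, B < |g s| := by
    intro s hs
    have hsE : s ∈ Ioo l d := ⟨lt_of_le_of_lt (le_max_left l m₀) hs.1, hs.2⟩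
    obtain ⟨h5, h6⟩ := hIooE hsE
    have hsmem : s ∈ Ioo m₀ d := ⟨lt_of_le_of_lt (le_max_right l m₀) hs.1, hs.2⟩
    have hDs : D s ≠ 0 := hIco s ⟨hsmem.1.le, hsmem.2⟩
    have hCs : D s * g s ^ 2 = K := hCc s ⟨hsmem.1.le, hsmem.2⟩
    have habs : |D s| * |g s| ^ 2 = |K| := by
      rw [← abs_pow, ← abs_mul, hCs]
    have hDpos : 0 < |D s| := abs_pos.2 hDs
    have h7 : B ^ 2 < |g s| ^ 2 := by
      rw [show |g s| ^ 2 = |K| / |D s| by rw [eq_div_iff (ne_of_gt hDpos)]; linear_combination habs]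
      rw [lt_div_iff₀ hDpos]
      calc B ^ 2 * |D s| < B ^ 2 * (|K| / B ^ 2) := by
            apply mul_lt_mul_of_pos_left h5 (by positivity)
        _ = |K| := by field_simp
    exact lt_of_pow_lt_pow_left₀ 2 (abs_nonneg _) h7
  obtain ⟨t₁, ht₁a, ht₁b⟩ := (hev1.and (eventually_of_mem
    (Ioo_mem_nhdsLT_of_mem ⟨hl'd, le_refl d⟩) (fun t ht => ht))).exists
  have hsubS : Icc t₁ d ⊆ S := fun s hs =>
    hIccS ⟨(le_max_right l m₀).trans (ht₁b.1.le.trans hs.1), hs.2.trans hdIcc.2⟩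
  obtain ⟨c, hc, hc2⟩ := exists_hasDerivAt_eq_slope G g ht₁b.2
    (fun s hs => (hG s (hsubS hs)).continuousAt.continuousWithinAt)
    (fun s hs => hG s (hsubS (Ioo_subset_Icc_self hs)))
  have hcIoo : c ∈ Ioo l' d := ⟨ht₁b.1.trans hc.1, hc.2⟩
  have h8 : B < |g c| := hgbig c hcIoo
  have h9 : |g c| < B := by
    rw [hc2]
    exact ht₁a
  linarith


lemma aux_nz' (S : Set ℝ) (hSc : S.OrdConnected)
    (G g D : ℝ → ℝ)
    (hG : ∀ x ∈ S, HasDerivAt G (g x) x)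
    (hDc : ∀ x ∈ S, ContinuousAt D x)
    (hC : ∀ m ∈ S, D m ≠ 0 → HasDerivAt (fun t => D t * g t ^ 2) 0 m)
    (hgne : ∀ x ∈ S, g x ≠ 0)
    (m₀ z : ℝ) (hm₀ : m₀ ∈ S) (hz : z ∈ S) (hlt : z < m₀) (hD0 : D m₀ ≠ 0) : D z ≠ 0 := by
  have hres := aux_nz ((fun x : ℝ => -x) ⁻¹' S)
    ⟨fun x hx y hy => fun w hw => show -w ∈ S from
      hSc.out hy hx ⟨neg_le_neg hw.2, neg_le_neg hw.1⟩⟩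
    (fun x => G (-x)) (fun x => -g (-x)) (fun x => D (-x))
    (fun x hx => by
      have h1 := (hG (-x) hx).comp x (hasDerivAt_neg x)
      simpa [mul_comm, Function.comp_def] using h1)
    (fun x hx => ContinuousAt.comp (hDc (-x) hx) continuous_neg.continuousAt)
    (fun m hm hD => by
      have h1 := (hC (-m) hm hD).comp m (hasDerivAt_neg m)
      have h2 : ((fun t => D t * g t ^ 2) ∘ fun x => -x) = fun t => D (-t) * (-g (-t)) ^ 2 := by
        funext t
        simp [Function.comp, neg_sq]
      rw [h2] at h1
      simpa using h1)
    (fun x hx => by simpa using hgne (-x) hx)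
    (-m₀) (-z) (by simpa using hm₀) (by simpa using hz) (by linarith) (by simpa using hD0)
  simpa using hres

lemma div_div_same_cancel (A B c : ℝ) (hc : c ≠ 0) : (A / c) / (B / c) = A / B := by
  rcases eq_or_ne B 0 with rfl | hB
  · simp
  · field_simp

/-- Proposition 5.1, first part -/
theorem stmt_12 (J I : Set ℝ) (hJo : IsOpen J) (hJc : J.OrdConnected) (hJne : J.Nonempty)
    (F G f g : ℝ → ℝ)
    (hF : ∀ x ∈ J, HasDerivAt F (f x) x) (hG : ∀ x ∈ J, HasDerivAt G (g x) x)
    (hIJ : I ⊆ J) (hIne : I.Nonempty) (hIc : I.OrdConnected)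
    (hg : ∀ x ∈ I, g x ≠ 0)
    (heq : ∀ a ∈ I, ∀ b ∈ I,
      (F b - F a) * g ((a + b) / 2) = (G b - G a) * f ((a + b) / 2)) :
    ∃ A K : ℝ, ∃ x₀ ∈ I,
      ∀ x ∈ I, f x = (A + K * ∫ t in x₀..x, 1 / (g t)^2) * g x := by
  classical
  set φ : ℝ → ℝ := fun x => f x / g x with hφdef
  have hfφ : ∀ x ∈ I, f x = φ x * g x := by
    intro x hx
    simp only [hφdef]
    rw [div_mul_cancel₀ _ (hg x hx)]
  have hmid : ∀ a ∈ I, ∀ b ∈ I, (a+b)/2 ∈ I := by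
    intro a ha b hb
    rcases le_total a b with h | h
    · exact hIc.out ha hb ⟨by linarith, by linarith⟩
    · exact hIc.out hb ha ⟨by linarith, by linarith⟩
  have hGI : ∀ a ∈ I, ∀ b ∈ I, a ≠ b → G b - G a ≠ 0 := by
    intro a ha b hb hab
    have key : ∀ u v : ℝ, u ∈ I → v ∈ I → u < v → G v - G u ≠ 0 := by
      intro u v hu hv huv
      have hsub : Icc u v ⊆ I := hIc.out hu hv
      obtain ⟨c, hc, hc2⟩ := exists_hasDerivAt_eq_slope G g huv
        (fun x hx => (hG x (hIJ (hsub hx))).continuousAt.continuousWithinAt)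
        (fun x hx => hG x (hIJ (hsub (Ioo_subset_Icc_self hx))))
      have hcI : c ∈ I := hsub (Ioo_subset_Icc_self hc)
      intro h0
      rw [h0] at hc2
      exact hg c hcI (by simpa [zero_div] using hc2)
    rcases lt_or_gt_of_ne hab with h | h
    · exact key a b ha hb h
    · have := key b a hb ha h
      intro h0; apply this; linarith
  have hslope : ∀ a ∈ I, ∀ b ∈ I, a ≠ b → φ ((a+b)/2) = (F b - F a) / (G b - G a) := by
    intro a ha b hb hab
    have hm : (a+b)/2 ∈ I := hmid a ha b hb
    simp only [hφdef]
    rw [div_eq_div_iff (hg _ hm) (hGI a ha b hb hab)]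
    linear_combination -heq a ha b hb
  -- degenerate case: I a singleton
  by_cases hsing : ∀ x ∈ I, ∀ y ∈ I, x = y
  · obtain ⟨c, hc⟩ := hIne
    refine ⟨φ c, 0, c, hc, fun x hx => ?_⟩
    have hxc : x = c := hsing x hx c hc
    subst hxc
    rw [intervalIntegral.integral_same]
    rw [hfφ x hx]; ring
  push_neg at hsing
  obtain ⟨p, hp, q, hq, hpq0⟩ := hsing
  -- basic sets
  set S : Set ℝ := interior I with hSdef
  have hSo : IsOpen S := isOpen_interior
  have hSI : S ⊆ I := interior_subset
  have hSJ : S ⊆ J := fun x hx => hIJ (hSI hx)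
  have hIoo : ∀ a ∈ I, ∀ b ∈ I, Ioo a b ⊆ S := by
    intro a ha b hb
    rcases le_or_gt b a with h | h
    · simp [Ioo_eq_empty_of_le h]
    · exact interior_maximal (fun x hx => hIc.out ha hb ⟨le_of_lt hx.1, le_of_lt hx.2⟩) isOpen_Ioo
  have hSne : S.Nonempty := by
    rcases lt_or_gt_of_ne hpq0 with h | h
    · exact ⟨(p+q)/2, hIoo p hp q hq ⟨by linarith, by linarith⟩⟩
    · exact ⟨(q+p)/2, hIoo q hq p hp ⟨by linarith, by linarith⟩⟩
  have hSc : S.OrdConnected := hIc.interior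
  have hmidS : ∀ a ∈ S, ∀ b ∈ S, (a+b)/2 ∈ S := by
    intro a ha b hb
    rcases le_total a b with h | h
    · exact hSc.out ha hb ⟨by linarith, by linarith⟩
    · exact hSc.out hb ha ⟨by linarith, by linarith⟩
  -- first derivative of φ
  have hder : ∀ m ∈ S, ∀ a ∈ S, a ≠ m → 2*m - a ∈ S →
      HasDerivAt φ (2 * (g (2*m-a) * (φ (2*m-a) - φ m)) / (G (2*m-a) - G a)) m := by
    intro m hm a ha ham hb
    have hbI : 2*m - a ∈ I := hSI hb
    have haI : a ∈ I := hSI ha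
    have hmI : m ∈ I := hSI hm
    have hba : a ≠ 2*m - a := fun h => ham (by linarith)
    have hGba : G (2*m-a) - G a ≠ 0 := hGI a haI _ hbI hba
    have hloc : (fun m' => (F (2*m'-a) - F a) / (G (2*m'-a) - G a)) =ᶠ[𝓝 m] φ := by
      have hopen : IsOpen (S ∩ (fun m' : ℝ => 2*m'-a) ⁻¹' S ∩ {a}ᶜ) :=
        (hSo.inter (hSo.preimage (by fun_prop))).inter isOpen_compl_singleton
      have hmem : m ∈ S ∩ (fun m' : ℝ => 2*m'-a) ⁻¹' S ∩ {a}ᶜ := ⟨⟨hm, hb⟩, ham.symm⟩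
      filter_upwards [hopen.mem_nhds hmem] with m' hm'
      obtain ⟨⟨h1, h2⟩, h3⟩ := hm'
      have h4 : a ≠ 2*m' - a := fun h => h3 (show m' = a by linarith)
      have h5 := hslope a haI _ (hSI h2) h4
      rw [show (a + (2*m'-a))/2 = m' by ring] at h5
      exact h5.symm
    have haff : HasDerivAt (fun m' : ℝ => 2*m'-a) 2 m := by
      simpa using ((hasDerivAt_id m).const_mul 2).sub_const a
    have hFb : HasDerivAt (fun m' => F (2*m'-a) - F a) (f (2*m-a) * 2) m :=
      (((hF _ (hIJ hbI)).comp m haff)).sub_const (F a)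
    have hGb : HasDerivAt (fun m' => G (2*m'-a) - G a) (g (2*m-a) * 2) m :=
      (((hG _ (hIJ hbI)).comp m haff)).sub_const (G a)
    have hdiv : HasDerivAt φ _ m := (hFb.div hGb hGba).congr_of_eventuallyEq hloc.symm
    convert hdiv using 1
    have hFba : F (2*m-a) - F a = φ m * (G (2*m-a) - G a) := by
      have h2 := hslope a haI _ hbI hba
      rw [show (a + (2*m-a))/2 = m by ring] at h2
      rw [h2]
      field_simp
    have hfb : f (2*m-a) = φ (2*m-a) * g (2*m-a) := hfφ _ hbI
    rw [hfb, hFba]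
    field_simp
  have hpick : ∀ m ∈ S, ∃ a ∈ S, a ≠ m ∧ 2*m - a ∈ S := by
    intro m hm
    obtain ⟨ε, hε, hball⟩ := Metric.isOpen_iff.1 hSo m hm
    refine ⟨m - ε/2, hball ?_, by intro h; nlinarith, hball ?_⟩
    · simp only [Metric.mem_ball, Real.dist_eq]
      rw [show m - ε/2 - m = -(ε/2) by ring, abs_neg, abs_of_pos (by linarith)]
      linarith
    · simp only [Metric.mem_ball, Real.dist_eq]
      rw [show 2*m - (m - ε/2) - m = ε/2 by ring, abs_of_pos (by linarith)]
      linarith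
  have hdiff : ∀ m ∈ S, HasDerivAt φ (deriv φ m) m := by
    intro m hm
    obtain ⟨a, ha, ham, hb⟩ := hpick m hm
    have h := hder m hm a ha ham hb
    rw [← h.deriv] at h
    exact h
  have hkey : ∀ x ∈ S, ∀ y ∈ S,
      deriv φ ((x+y)/2) * (G y - G x) = 2 * (g y * (φ y - φ ((x+y)/2))) := by
    intro x hx y hy
    rcases eq_or_ne x y with rfl | hxy
    · simp
    · have hm : (x+y)/2 ∈ S := hmidS x hx y hy
      have hxm : x ≠ (x+y)/2 := fun h => hxy (by linarith)
      have hyx : 2*((x+y)/2) - x = y := by ring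
      have h := hder _ hm x hx hxm (by rw [hyx]; exact hy)
      rw [hyx] at h
      rw [h.deriv, div_mul_cancel₀]
      exact hGI x (hSI hx) y (hSI hy) hxy
  have hkey2 : ∀ x ∈ S, ∀ y ∈ S,
      deriv φ ((x+y)/2) * (G y - G x) = 2 * (g x * (φ ((x+y)/2) - φ x)) := by
    intro x hx y hy
    have h := hkey y hy x hx
    rw [show (y+x)/2 = (x+y)/2 by ring] at h
    linear_combination -h
  have hder2 : ∀ m ∈ S, ∀ x ∈ S, x ≠ m → 2*m - x ∈ S →
      HasDerivAt (deriv φ) (2 * deriv φ m * (g x - g (2*m-x)) / (G (2*m-x) - G x)) m := by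
    intro m hm x hx hxm hy
    have hyx : x ≠ 2*m - x := fun h => hxm (by linarith)
    have hGyx : G (2*m-x) - G x ≠ 0 := hGI x (hSI hx) _ (hSI hy) hyx
    have hloc : (fun m' => 2 * (g x * (φ m' - φ x)) / (G (2*m'-x) - G x)) =ᶠ[𝓝 m] deriv φ := by
      have hopen : IsOpen (S ∩ (fun m' : ℝ => 2*m'-x) ⁻¹' S ∩ {x}ᶜ) :=
        (hSo.inter (hSo.preimage (by fun_prop))).inter isOpen_compl_singleton
      filter_upwards [hopen.mem_nhds ⟨⟨hm, hy⟩, hxm.symm⟩] with m' hm'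
      obtain ⟨⟨h1, h2⟩, h3⟩ := hm'
      have h4 : x ≠ 2*m' - x := fun h => h3 (show m' = x by linarith)
      have hG' : G (2*m'-x) - G x ≠ 0 := hGI x (hSI hx) _ (hSI h2) h4
      have h5 := hkey2 x hx (2*m'-x) h2
      rw [show (x + (2*m'-x))/2 = m' by ring] at h5
      rw [div_eq_iff hG']
      exact h5.symm
    have hu : HasDerivAt (fun m' => 2 * (g x * (φ m' - φ x))) (2 * (g x * deriv φ m)) m :=
      (((hdiff m hm).sub_const (φ x)).const_mul (g x)).const_mul 2
    have haff : HasDerivAt (fun m' : ℝ => 2*m'-x) 2 m := by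
      simpa using ((hasDerivAt_id m).const_mul 2).sub_const x
    have hv : HasDerivAt (fun m' => G (2*m'-x) - G x) (g (2*m-x) * 2) m :=
      (((hG _ (hSJ hy)).comp m haff)).sub_const (G x)
    have hdiv : HasDerivAt (deriv φ) _ m := (hu.div hv hGyx).congr_of_eventuallyEq hloc.symm
    convert hdiv using 1
    have h6 := hkey2 x hx (2*m-x) hy
    rw [show (x + (2*m-x))/2 = m by ring] at h6
    rw [div_eq_div_iff hGyx (pow_ne_zero 2 hGyx)]
    linear_combination (-2 * g (2*m-x) * (G (2*m-x) - G x)) * h6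
  have hdd : ∀ m ∈ S, HasDerivAt (deriv φ) (deriv (deriv φ) m) m := by
    intro m hm
    obtain ⟨a, ha, ham, hb⟩ := hpick m hm
    have h := hder2 m hm a ha ham hb
    rw [← h.deriv] at h
    exact h
  have hlim : ∀ e ∈ I, Tendsto (fun b => (F b - F e)/(G b - G e)) (𝓝[≠] e) (𝓝 (φ e)) := by
    intro e he
    have h1 := hasDerivAt_iff_tendsto_slope.1 (hF e (hIJ he))
    have h2 := hasDerivAt_iff_tendsto_slope.1 (hG e (hIJ he))
    have h3 := h1.div h2 (hg e he)
    refine h3.congr (fun b => ?_)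
    simp only [slope_def_field, Pi.div_apply]
    rcases eq_or_ne b e with rfl | hbe
    · simp
    · exact div_div_same_cancel _ _ _ (sub_ne_zero.2 hbe)
  have hcontIcc : ∀ u ∈ I, ∀ v ∈ I, u < v → ContinuousOn φ (Icc u v) := by
    intro u hu v hv huv e he
    by_cases heS : e ∈ S
    · exact (hdiff e heS).continuousAt.continuousWithinAt
    · have heI : e ∈ I := hIc.out hu hv he
      have heuv : e = u ∨ e = v := by
        by_contra hcon
        push_neg at hcon
        exact heS (hIoo u hu v hv ⟨lt_of_le_of_ne he.1 (Ne.symm hcon.1),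
          lt_of_le_of_ne he.2 hcon.2⟩)
      rw [← continuousWithinAt_diff_self]
      have hmap : Tendsto (fun b => 2*b - e) (𝓝[Icc u v \ {e}] e) (𝓝[≠] e) := by
        rw [tendsto_nhdsWithin_iff]
        constructor
        · have hc : Tendsto (fun b : ℝ => 2*b - e) (𝓝 e) (𝓝 (2*e - e)) :=
            (((continuous_const.mul continuous_id).sub continuous_const).tendsto e)
          rw [show 2*e - e = e by ring] at hc
          exact hc.mono_left nhdsWithin_le_nhds
        · filter_upwards [self_mem_nhdsWithin] with b hb
          intro hcon
          rw [mem_singleton_iff] at hcon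
          exact hb.2 (mem_singleton_iff.2 (by linarith))
      have htend := (hlim e heI).comp hmap
      have hev : ∀ᶠ b in 𝓝[Icc u v \ {e}] e,
          ((fun b' => (F b' - F e)/(G b' - G e)) ∘ (fun b => 2*b - e)) b = φ b := by
        have hball : ∀ᶠ b : ℝ in 𝓝 e, |b - e| < (v - u)/2 :=
          eventually_abs_sub_lt e (by linarith)
        filter_upwards [self_mem_nhdsWithin,
          eventually_nhdsWithin_of_eventually_nhds hball] with b hb hb2
        have hbe : b ∉ ({e} : Set ℝ) := hb.2
        rw [mem_singleton_iff] at hbe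
        rw [abs_lt] at hb2
        have h2bI : 2*b - e ∈ I := by
          apply hIc.out hu hv
          rcases heuv with rfl | rfl
          · exact ⟨by linarith [hb.1.1], by linarith [hb.1.1]⟩
          · exact ⟨by linarith [hb.1.2], by linarith [hb.1.2]⟩
        have h4 : e ≠ 2*b - e := fun h => hbe (by linarith)
        have h5 := hslope e heI _ h2bI h4
        rw [show (e + (2*b - e))/2 = b by ring] at h5
        simp only [Function.comp_apply]
        exact h5.symm
      exact htend.congr' hev
  have hC0 : ∀ m₀ ∈ S, deriv φ m₀ ≠ 0 → HasDerivAt (fun t => deriv φ t * g t ^ 2) 0 m₀ := by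
    intro m₀ hm₀ hD0
    have hcd : ContinuousAt (deriv φ) m₀ := (hdd m₀ hm₀).continuousAt
    have hne : ∀ᶠ t in 𝓝 m₀, deriv φ t ≠ 0 := hcd.eventually_ne hD0
    obtain ⟨δ₁, hδ₁, hball₁⟩ := Metric.eventually_nhds_iff.1 hne
    obtain ⟨δ₂, hδ₂, hball₂⟩ := Metric.isOpen_iff.1 hSo m₀ hm₀
    set δ := min δ₁ δ₂ with hδdef
    have hδ0 : 0 < δ := lt_min hδ₁ hδ₂
    have hballS : Metric.ball m₀ δ ⊆ S := fun t ht =>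
      hball₂ (Metric.ball_subset_ball (min_le_right _ _) ht)
    have hballne : ∀ t ∈ Metric.ball m₀ δ, deriv φ t ≠ 0 := fun t ht =>
      hball₁ (lt_of_lt_of_le (Metric.mem_ball.1 ht) (min_le_left _ _))
    have hinjlt : ∀ x y : ℝ, x ∈ Metric.ball m₀ δ → y ∈ Metric.ball m₀ δ → x < y →
        φ x ≠ φ y := by
      intro x y hx hy hxy
      have hIccb : Icc x y ⊆ Metric.ball m₀ δ := (convex_ball m₀ δ).ordConnected.out hx hy
      obtain ⟨c, hc, hc2⟩ := exists_hasDerivAt_eq_slope φ (deriv φ) hxy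
        (fun s hs => (hdiff s (hballS (hIccb hs))).continuousAt.continuousWithinAt)
        (fun s hs => hdiff s (hballS (hIccb (Ioo_subset_Icc_self hs))))
      intro h0
      apply hballne c (hIccb (Ioo_subset_Icc_self hc))
      rw [hc2, h0, sub_self, zero_div]
    set x' := m₀ - δ/2 with hx'def
    have hx'ball : x' ∈ Metric.ball m₀ δ := by
      simp only [Metric.mem_ball, Real.dist_eq, hx'def]
      rw [show m₀ - δ/2 - m₀ = -(δ/2) by ring, abs_neg, abs_of_pos (by linarith)]
      linarith
    have hmid₀ball : (x' + m₀)/2 ∈ Metric.ball m₀ δ := by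
      simp only [Metric.mem_ball, Real.dist_eq, hx'def]
      rw [show (m₀ - δ/2 + m₀)/2 - m₀ = -(δ/4) by ring, abs_neg, abs_of_pos (by linarith)]
      linarith
    have hmd₀S : (x' + m₀)/2 ∈ S := hballS hmid₀ball
    have hloc : (fun m' => deriv φ ((x'+m')/2) * (G m' - G x') /
        (2 * (φ m' - φ ((x'+m')/2)))) =ᶠ[𝓝 m₀] g := by
      filter_upwards [Metric.ball_mem_nhds m₀ (show (0:ℝ) < δ/4 by linarith)] with m' hm'
      rw [Metric.mem_ball, Real.dist_eq, abs_lt] at hm'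
      have h1 : m' ∈ Metric.ball m₀ δ := by
        rw [Metric.mem_ball, Real.dist_eq, abs_lt]
        constructor <;> linarith [hm'.1, hm'.2]
      have hmidb : (x'+m')/2 ∈ Metric.ball m₀ δ := by
        rw [Metric.mem_ball, Real.dist_eq, abs_lt]
        constructor <;> [simp only [hx'def]; simp only [hx'def]] <;> linarith [hm'.1, hm'.2]
      have hx'm : x' < m' := by simp only [hx'def]; linarith [hm'.1]
      have hmidm : (x'+m')/2 < m' := by linarith
      have hφne : φ m' - φ ((x'+m')/2) ≠ 0 :=
        sub_ne_zero.2 (Ne.symm (hinjlt _ _ hmidb h1 hmidm))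
      have hk := hkey x' (hballS hx'ball) m' (hballS h1)
      rw [hk]
      field_simp
    have haff2 : HasDerivAt (fun m' : ℝ => (x'+m')/2) (1/2) m₀ := by
      have := ((hasDerivAt_id m₀).const_add x').div_const (2:ℝ)
      simpa using this
    have hc1 : HasDerivAt (fun m' => deriv φ ((x'+m')/2))
        (deriv (deriv φ) ((x'+m₀)/2) * (1/2)) m₀ := by
      have h := (hdd _ hmd₀S).comp m₀ haff2; exact h
    have hc2 : HasDerivAt (fun m' => G m' - G x') (g m₀) m₀ :=
      (hG m₀ (hSJ hm₀)).sub_const (G x')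
    have hnum := hc1.mul hc2
    have hc3 : HasDerivAt (fun m' => φ ((x'+m')/2)) (deriv φ ((x'+m₀)/2) * (1/2)) m₀ :=
      by have h := (hdiff _ hmd₀S).comp m₀ haff2; exact h
    have hc4 : HasDerivAt (fun m' => 2 * (φ m' - φ ((x'+m')/2)))
        (2 * (deriv φ m₀ - deriv φ ((x'+m₀)/2) * (1/2))) m₀ :=
      ((hdiff m₀ hm₀).sub hc3).const_mul 2
    have hmid₀ne : (x'+m₀)/2 ≠ m₀ := by simp only [hx'def]; intro h; nlinarith [hδ0]
    have hden0 : 2 * (φ m₀ - φ ((x'+m₀)/2)) ≠ 0 := by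
      have := hinjlt _ _ hmid₀ball (Metric.mem_ball_self hδ0) (by simp only [hx'def]; linarith)
      intro h
      apply this
      have h2 : φ m₀ - φ ((x'+m₀)/2) = 0 := by linarith
      linarith [sub_eq_zero.1 h2]
    obtain ⟨gd, hgd⟩ : ∃ gd, HasDerivAt g gd m₀ :=
      ⟨_, (hnum.div hc4 hden0).congr_of_eventuallyEq hloc.symm⟩
    have hslope2 : ∀ (H : ℝ → ℝ) (dH : ℝ), HasDerivAt H dH m₀ →
        Tendsto (fun t => (H (m₀+t) - H (m₀-t))/t) (𝓝[>] (0:ℝ)) (𝓝 (2*dH)) := by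
      intro H dH hH
      have h1 := hasDerivAt_iff_tendsto_slope.1 hH
      have hplus : Tendsto (fun t : ℝ => m₀ + t) (𝓝[>] (0:ℝ)) (𝓝[≠] m₀) := by
        rw [tendsto_nhdsWithin_iff]
        constructor
        · have hco : Tendsto (fun t : ℝ => m₀ + t) (𝓝 0) (𝓝 (m₀ + 0)) :=
            Continuous.tendsto (by fun_prop) 0
          rw [add_zero] at hco
          exact hco.mono_left nhdsWithin_le_nhds
        · filter_upwards [self_mem_nhdsWithin] with t ht
          simp only [mem_compl_iff, mem_singleton_iff]
          intro hcon
          rw [mem_Ioi] at ht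
          have : t = 0 := by linarith
          linarith
      have hminus : Tendsto (fun t : ℝ => m₀ - t) (𝓝[>] (0:ℝ)) (𝓝[≠] m₀) := by
        rw [tendsto_nhdsWithin_iff]
        constructor
        · have hco : Tendsto (fun t : ℝ => m₀ - t) (𝓝 0) (𝓝 (m₀ - 0)) :=
            Continuous.tendsto (by fun_prop) 0
          rw [sub_zero] at hco
          exact hco.mono_left nhdsWithin_le_nhds
        · filter_upwards [self_mem_nhdsWithin] with t ht
          simp only [mem_compl_iff, mem_singleton_iff]
          intro hcon
          rw [mem_Ioi] at ht
          have : t = 0 := by linarith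
          linarith
      have h2 := (h1.comp hplus).add (h1.comp hminus)
      have hcongr : ∀ᶠ t in 𝓝[>] (0:ℝ),
          (slope H m₀ ∘ (fun t : ℝ => m₀ + t)) t + (slope H m₀ ∘ (fun t : ℝ => m₀ - t)) t
            = (H (m₀+t) - H (m₀-t))/t := by
        filter_upwards [self_mem_nhdsWithin] with t ht
        rw [mem_Ioi] at ht
        have ht0 : (t:ℝ) ≠ 0 := ne_of_gt ht
        simp only [Function.comp_apply, slope_def_field]
        rw [show m₀ + t - m₀ = t by ring, show m₀ - t - m₀ = -t by ring]
        rw [div_neg, ← neg_div, ← add_div]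
        congr 1
        ring
      have h3 := h2.congr' hcongr
      rw [show dH + dH = 2*dH by ring] at h3
      exact h3
    have hTG := hslope2 G (g m₀) (hG m₀ (hSJ hm₀))
    have hTg := hslope2 g gd hgd
    have heveq : ∀ᶠ t in 𝓝[>] (0:ℝ),
        deriv (deriv φ) m₀ * ((G (m₀+t) - G (m₀-t))/t)
          = (-2 * deriv φ m₀) * ((g (m₀+t) - g (m₀-t))/t) := by
      filter_upwards [Ioo_mem_nhdsGT_of_mem (show (0:ℝ) ∈ Ico 0 δ from ⟨le_refl 0, hδ0⟩)]
        with t ht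
      have hmp : m₀ + t ∈ S := by
        apply hballS
        rw [Metric.mem_ball, Real.dist_eq, show m₀ + t - m₀ = t by ring,
          abs_of_pos ht.1]
        exact ht.2
      have hmm : m₀ - t ∈ S := by
        apply hballS
        rw [Metric.mem_ball, Real.dist_eq, show m₀ - t - m₀ = -t by ring, abs_neg,
          abs_of_pos ht.1]
        exact ht.2
      have hxne : m₀ - t ≠ m₀ := by intro h; linarith [ht.1]
      have h2 := hder2 m₀ hm₀ (m₀ - t) hmm hxne
        (by rw [show 2*m₀ - (m₀ - t) = m₀ + t by ring]; exact hmp)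
      rw [show 2*m₀ - (m₀ - t) = m₀ + t by ring] at h2
      have huq := (hdd m₀ hm₀).unique h2
      have hGne : G (m₀+t) - G (m₀-t) ≠ 0 := by
        apply hGI _ (hSI hmm) _ (hSI hmp)
        intro h; linarith [ht.1]
      have h4 : deriv (deriv φ) m₀ * (G (m₀+t) - G (m₀-t))
          = 2 * deriv φ m₀ * (g (m₀-t) - g (m₀+t)) := by
        rw [huq, div_mul_cancel₀ _ hGne]
      rw [mul_div_assoc', mul_div_assoc']
      exact congrArg (fun z => z / t) (by linear_combination h4)
    have hlim1 := hTG.const_mul (deriv (deriv φ) m₀)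
    have hlim2 := (hTg.const_mul (-2 * deriv φ m₀)).congr' (heveq.mono fun t h => h.symm)
    have huniq := tendsto_nhds_unique hlim1 hlim2
    have hrel : deriv (deriv φ) m₀ * g m₀ = -2 * deriv φ m₀ * gd := by
      linear_combination huniq / 2
    have hfinal : HasDerivAt (fun t => deriv φ t * g t ^ 2) _ m₀ := (hdd m₀ hm₀).mul (hgd.pow 2)
    convert hfinal using 1
    linear_combination (-(g m₀)) * hrel
  obtain ⟨K, hKform, hint⟩ : ∃ K : ℝ, (∀ t ∈ S, deriv φ t = K / g t ^ 2) ∧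
      (∀ u v : ℝ, u ∈ I → v ∈ I → u < v → IntervalIntegrable (deriv φ) volume u v) := by
    by_cases hA : ∀ t ∈ S, deriv φ t = 0
    · refine ⟨0, fun t ht => by rw [hA t ht, zero_div], fun u v hu hv huv => ?_⟩
      have hIoo2 : Ioo u v ⊆ S := hIoo u hu v hv
      rw [intervalIntegrable_iff_integrableOn_Ioo_of_le huv.le]
      exact (integrableOn_zero).congr_fun (fun t ht => (hA t (hIoo2 ht)).symm) measurableSet_Ioo
    · push_neg at hA
      obtain ⟨m₀, hm₀, hD0⟩ := hA
      have hU : ∀ t ∈ S, deriv φ t ≠ 0 := by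
        intro z hz
        rcases lt_trichotomy m₀ z with h | h | h
        · exact aux_nz S hSc G g (deriv φ) (fun x hx => hG x (hSJ hx))
            (fun x hx => (hdd x hx).continuousAt) hC0 (fun x hx => hg x (hSI hx)) m₀ z hm₀ hz h hD0
        · rw [← h]; exact hD0
        · exact aux_nz' S hSc G g (deriv φ) (fun x hx => hG x (hSJ hx))
            (fun x hx => (hdd x hx).continuousAt) hC0 (fun x hx => hg x (hSI hx)) m₀ z hm₀ hz h hD0
      set K := deriv φ m₀ * g m₀ ^ 2 with hKdef
      have hK0 : K ≠ 0 := mul_ne_zero hD0 (pow_ne_zero 2 (hg m₀ (hSI hm₀)))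
      have hCconst : ∀ t ∈ S, deriv φ t * g t ^ 2 = K := by
        intro t ht
        have key : ∀ a b : ℝ, a ∈ S → b ∈ S → a < b →
            deriv φ a * g a ^ 2 = deriv φ b * g b ^ 2 := by
          intro a b ha hb hab
          have hsub : Icc a b ⊆ S := hSc.out ha hb
          obtain ⟨c, hc, hc2⟩ := exists_hasDerivAt_eq_slope
            (fun t => deriv φ t * g t ^ 2) (fun _ => 0) hab
            (fun s hs => (hC0 s (hsub hs) (hU s (hsub hs))).continuousAt.continuousWithinAt)
            (fun s hs => hC0 s (hsub (Ioo_subset_Icc_self hs))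
              (hU s (hsub (Ioo_subset_Icc_self hs))))
          rcases div_eq_zero_iff.1 hc2.symm with h3 | h3
          · linarith
          · exact absurd (by linarith : a = b) (ne_of_lt hab)
        rcases lt_trichotomy t m₀ with h | h | h
        · exact key t m₀ ht hm₀ h
        · rw [h]
        · exact (key m₀ t hm₀ ht h).symm
      have hKform : ∀ t ∈ S, deriv φ t = K / g t ^ 2 := by
        intro t ht
        rw [eq_div_iff (pow_ne_zero 2 (hg t (hSI ht)))]
        exact hCconst t ht
      refine ⟨K, hKform, ?_⟩
      intro u v hu hv huv
      have hIoo2 : Ioo u v ⊆ S := hIoo u hu v hv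
      have hcont : ContinuousOn φ (Icc u v) := hcontIcc u hu v hv huv
      rcases lt_or_gt_of_ne hK0 with hKneg | hKpos
      · have hi := integrableOn_deriv_of_nonneg (g := fun t => -φ t)
          (g' := fun t => -deriv φ t) hcont.neg (fun x hx => (hdiff x (hIoo2 hx)).neg)
          (fun x hx => by
            show (0:ℝ) ≤ -deriv φ x
            rw [hKform x (hIoo2 hx)]
            exact neg_nonneg.2 (div_nonpos_of_nonpos_of_nonneg hKneg.le (sq_nonneg _)))
        rw [intervalIntegrable_iff_integrableOn_Ioc_of_le huv.le]
        have hi2 := hi.neg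
        have hfe : (-fun t => -deriv φ t) = deriv φ := by funext t; simp
        rw [hfe] at hi2
        exact hi2
      · have hi := integrableOn_deriv_of_nonneg (g := φ) (g' := deriv φ)
          hcont (fun x hx => hdiff x (hIoo2 hx))
          (fun x hx => by
            rw [hKform x (hIoo2 hx)]
            exact div_nonneg hKpos.le (sq_nonneg _))
        rw [intervalIntegrable_iff_integrableOn_Ioc_of_le huv.le]
        exact hi
  obtain ⟨x₀, hx₀S⟩ := hSne
  have hx₀I : x₀ ∈ I := hSI hx₀S
  have claim : ∀ u ∈ I, ∀ v ∈ I, u < v → φ v - φ u = K * ∫ t in u..v, 1/(g t)^2 := by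
    intro u hu v hv huv
    have hIoo2 : Ioo u v ⊆ S := hIoo u hu v hv
    have hFTC : ∫ t in u..v, deriv φ t = φ v - φ u :=
      integral_eq_sub_of_hasDeriv_right_of_le huv.le (hcontIcc u hu v hv huv)
        (fun x hx => (hdiff x (hIoo2 hx)).hasDerivWithinAt) (hint u v hu hv huv)
    have hcong : ∫ t in u..v, deriv φ t = ∫ t in u..v, K * (1/(g t)^2) := by
      rw [integral_of_le huv.le, integral_of_le huv.le,
        integral_Ioc_eq_integral_Ioo, integral_Ioc_eq_integral_Ioo]
      apply setIntegral_congr_fun measurableSet_Ioo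
      intro t ht
      rw [hKform t (hIoo2 ht)]
      show K / g t ^ 2 = K * (1 / g t ^ 2)
      rw [mul_one_div]
    rw [← hFTC, hcong, intervalIntegral.integral_const_mul]
  refine ⟨φ x₀, K, x₀, hx₀I, ?_⟩
  intro x hx
  rcases lt_trichotomy x x₀ with h | h | h
  · have hc := claim x hx x₀ hx₀I h
    have hsym : ∫ t in x₀..x, 1/(g t)^2 = -∫ t in x..x₀, 1/(g t)^2 :=
      intervalIntegral.integral_symm x x₀
    rw [hfφ x hx, hsym]
    have h2 : φ x₀ + K * -(∫ t in x..x₀, 1/(g t)^2) = φ x := by linear_combination hc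
    rw [h2]
  · rw [h, intervalIntegral.integral_same, hfφ x₀ hx₀I, mul_zero, add_zero]
  · have hc := claim x₀ hx₀I x hx h
    rw [hfφ x hx]
    have h2 : φ x₀ + K * (∫ t in x₀..x, 1/(g t)^2) = φ x := by linear_combination -hc
    rw [h2]
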